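/- Let S be a symmetric numerical semigroup with multiplicity e = m(S) such that ord_S(s+e) = ord_S(s)+1 for all s∈S (i.e. the tangent cone G(S) is Cohen–Macaulay). Then the following are equivalent: (1) S is M-pure; (2) β_i(ke) = β_{d(ke)−i}(ke) for some k>0 and all 0 ≤ i ≤ ⌊(d(ke)+1)/2⌋; (3) β_i(ke) = β_{d(ke)−i}(ke) for every k>0 and all 0 ≤ i ≤ ⌊(d(ke)+1)/2⌋; (4) S is M-pure with respect to ke for every k>0; (5) S is M-pure with respect to ke for some k>0. -/

import Mathlib

open scoped Pointwise

/-- `S ⊆ ℕ` is a numerical semigroup: it contains `0`, is closed under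
addition, and has finite complement in `ℕ`. -/
def IsNumSgp (S : Set ℕ) : Prop :=
  (0 : ℕ) ∈ S ∧ (∀ a ∈ S, ∀ b ∈ S, a + b ∈ S) ∧ {x : ℕ | x ∉ S}.Finite

/-- `nM S t` is the `t`-fold sumset of the maximal ideal `M = S \ {0}`,
with the convention `nM S 0 = S`. -/
def nM (S : Set ℕ) : ℕ → Set ℕ
  | 0 => S
  | t + 1 => (S \ {0}) + nM S t

/-- the order of `s` with respect to `S` : the largest `t` with `s ∈ tM`. -/
noncomputable def ordS (S : Set ℕ) (s : ℕ) : ℕ := sSup {t : ℕ | s ∈ nM S t}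

/-- the multiplicity of `S` : its least nonzero element. -/
noncomputable def mult (S : Set ℕ) : ℕ := sInf {x : ℕ | x ∈ S ∧ x ≠ 0}

/-- the Apéry set of `S` with respect to `x` : elements `s ∈ S` with `s - x ∉ S`. -/
def Ap (S : Set ℕ) (x : ℕ) : Set ℕ := {s : ℕ | s ∈ S ∧ ¬ ∃ t ∈ S, s = t + x}

/-- membership of an integer in (the image in `ℤ` of) `S`. -/
def zmem (S : Set ℕ) (z : ℤ) : Prop := ∃ t ∈ S, (t : ℤ) = z

/-- the Frobenius number of `S` : the largest integer not in `S`. -/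
noncomputable def Frob (S : Set ℕ) : ℤ := sSup {z : ℤ | ¬ zmem S z}

/-- `S` is symmetric: for every integer `z`, `z ∈ S` iff `F(S) - z ∉ S`. -/
def IsSymmetric (S : Set ℕ) : Prop := ∀ z : ℤ, zmem S z ↔ ¬ zmem S (Frob S - z)

/-- the set of maximal elements of `Ap S x` with respect to the order
`u ⪯ v` iff `v = u + z` for some `z ∈ S`. -/
def MaxAp (S : Set ℕ) (x : ℕ) : Set ℕ :=
  {w : ℕ | w ∈ Ap S x ∧ ∀ y ∈ Ap S x, (∃ z ∈ S, y = w + z) → y = w}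

/-- the set of maximal elements of `Ap S x` with respect to the order
`u ⪯_M v` iff `v = u + z` for some `z ∈ S` with `ord(v) = ord(u) + ord(z)`. -/
def MaxMAp (S : Set ℕ) (x : ℕ) : Set ℕ :=
  {w : ℕ | w ∈ Ap S x ∧ ∀ y ∈ Ap S x,
    (∃ z ∈ S, y = w + z ∧ ordS S y = ordS S w + ordS S z) → y = w}

/-- `S` is M-pure with respect to `x` : all maximal elements of `Ap S x`
under `⪯_M` have the same order. -/
def MPureWrt (S : Set ℕ) (x : ℕ) : Prop :=
  ∀ w ∈ MaxMAp S x, ∀ w' ∈ MaxMAp S x, ordS S w = ordS S w'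

/-- `S` is M-pure : it is M-pure with respect to its multiplicity. -/
def MPure (S : Set ℕ) : Prop := MPureWrt S (mult S)

/-- `β_i(x)` : the number of elements of `Ap S x` of order `i`. -/
noncomputable def betaS (S : Set ℕ) (x i : ℕ) : ℕ := {w ∈ Ap S x | ordS S w = i}.ncard

/-- `d(x)` : the maximal order of an element of `Ap S x`. -/
noncomputable def dS (S : Set ℕ) (x : ℕ) : ℕ := sSup (ordS S '' Ap S x)

/-- the reduction number of `S` : the least `r` with `(r+1)M = m(S) + rM`. -/
noncomputable def redNum (S : Set ℕ) : ℕ :=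
  sInf {r : ℕ | nM S (r + 1) = (fun y => mult S + y) '' nM S r}

/-- `l_x(S) = max { ord(s+x) - ord(x) - ord(s) : s ∈ S, ord(s) ≤ r }`. -/
noncomputable def lS (S : Set ℕ) (x : ℕ) : ℕ :=
  sSup {t : ℕ | ∃ s ∈ S, ordS S s ≤ redNum S ∧ t = ordS S (s + x) - ordS S x - ordS S s}

/-- the Hilbert function of `S`. -/
noncomputable def HilbS (S : Set ℕ) (t : ℕ) : ℕ := (nM S t \ nM S (t + 1)).ncard

/-- The data of a gluing `S = ⟨q m₁, …, q m_d, p n₁, …, p n_k⟩` of two numerical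
semigroups `S₁ = ⟨m₁, …, m_d⟩` and `S₂ = ⟨n₁, …, n_k⟩`, minimally generated by
`m₁ < ⋯ < m_d` and `n₁ < ⋯ < n_k`, where `p ∈ S₁ \ {m₁, …, m_d}`,
`q ∈ S₂ \ {n₁, …, n_k}` and `gcd(p, q) = 1`. -/
structure Gluing where
  d : ℕ
  k : ℕ
  hd : 0 < d
  hk : 0 < k
  m : Fin d → ℕ
  n : Fin k → ℕ
  p : ℕ
  q : ℕ
  hm : StrictMono m
  hn : StrictMono n
  hmin₁ : ∀ i, m i ∉ AddSubmonoid.closure (Set.range m \ {m i})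
  hmin₂ : ∀ j, n j ∉ AddSubmonoid.closure (Set.range n \ {n j})
  hnum₁ : IsNumSgp (AddSubmonoid.closure (Set.range m) : Set ℕ)
  hnum₂ : IsNumSgp (AddSubmonoid.closure (Set.range n) : Set ℕ)
  hp : p ∈ AddSubmonoid.closure (Set.range m)
  hq : q ∈ AddSubmonoid.closure (Set.range n)
  hpm : p ∉ Set.range m
  hqn : q ∉ Set.range n
  hpq : Nat.gcd p q = 1

/-- the numerical semigroup `S₁ = ⟨m₁, …, m_d⟩`. -/
def Gluing.S₁ (G : Gluing) : Set ℕ := (AddSubmonoid.closure (Set.range G.m) : Set ℕ)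

/-- the numerical semigroup `S₂ = ⟨n₁, …, n_k⟩`. -/
def Gluing.S₂ (G : Gluing) : Set ℕ := (AddSubmonoid.closure (Set.range G.n) : Set ℕ)

/-- the glued numerical semigroup `S = ⟨q m₁, …, q m_d, p n₁, …, p n_k⟩`. -/
def Gluing.S (G : Gluing) : Set ℕ :=
  (AddSubmonoid.closure
    ((fun x => G.q * x) '' Set.range G.m ∪ (fun x => G.p * x) '' Set.range G.n) : Set ℕ)

/-- the smallest generator `m₁` of `S₁`. -/
def Gluing.m₁ (G : Gluing) : ℕ := G.m ⟨0, G.hd⟩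

/-- the smallest generator `n₁` of `S₂`. -/
def Gluing.n₁ (G : Gluing) : ℕ := G.n ⟨0, G.hk⟩

/-- the gluing is specific if `ord_{S₂}(q) + l_q(S₂) ≤ ord_{S₁}(p)`. -/
def Gluing.Specific (G : Gluing) : Prop := ordS G.S₂ G.q + lS G.S₂ G.q ≤ ordS G.S₁ G.p

/-- the gluing is nice if `q = a n₁` for some `1 < a ≤ ord_{S₁}(p)`. -/
def Gluing.Nice (G : Gluing) : Prop := ∃ a : ℕ, 1 < a ∧ a ≤ ordS G.S₁ G.p ∧ G.q = a * G.n₁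

section Aux
open scoped Classical

namespace NSAux

variable {S : Set ℕ}

/-! ### basic facts -/

lemma nM_mono_S (hS : IsNumSgp S) : ∀ t, ∀ a ∈ S, ∀ b ∈ nM S t, a + b ∈ nM S t := by
  intro t
  induction t with
  | zero => exact fun a ha b hb => hS.2.1 a ha b hb
  | succ t ih =>
    intro a ha b hb
    rcases Set.mem_add.1 hb with ⟨c, hc, d, hd, rfl⟩
    have : c + (a + d) ∈ nM S (t + 1) :=
      Set.mem_add.2 ⟨c, hc, a + d, ih a ha d hd, rfl⟩
    simpa [add_comm, add_left_comm, add_assoc] using this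

lemma nM_subset (hS : IsNumSgp S) : ∀ t, nM S t ⊆ S := by
  intro t
  induction t with
  | zero => exact fun s hs => hs
  | succ t ih =>
    intro s hs
    rcases Set.mem_add.1 hs with ⟨c, hc, d, hd, rfl⟩
    exact hS.2.1 c hc.1 d (ih hd)

lemma add_mem_nM (hS : IsNumSgp S) : ∀ t u : ℕ, ∀ a ∈ nM S t, ∀ b ∈ nM S u,
    a + b ∈ nM S (t + u) := by
  intro t
  induction t with
  | zero =>
    intro u a ha b hb
    simpa [add_comm] using nM_mono_S hS u a ha b hb
  | succ t ih =>
    intro u a ha b hb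
    rcases Set.mem_add.1 ha with ⟨c, hc, d, hd, rfl⟩
    have : c + (d + b) ∈ nM S (t + u + 1) :=
      Set.mem_add.2 ⟨c, hc, d + b, ih u d hd b hb, rfl⟩
    have e : t + 1 + u = t + u + 1 := by omega
    rw [e]
    simpa [add_assoc] using this

lemma mult_mem (hS : IsNumSgp S) : mult S ∈ S ∧ mult S ≠ 0 := by
  have hne : {x : ℕ | x ∈ S ∧ x ≠ 0}.Nonempty := by
    obtain ⟨N, hN⟩ := hS.2.2.bddAbove
    refine ⟨N + 1, ?_, by omega⟩
    by_contra h
    exact absurd (hN (by simpa using h)) (by omega)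
  exact Nat.sInf_mem hne

lemma mult_pos (hS : IsNumSgp S) : 0 < mult S := Nat.pos_of_ne_zero (mult_mem hS).2

lemma mult_le (hS : IsNumSgp S) {x : ℕ} (hx : x ∈ S) (hx0 : x ≠ 0) : mult S ≤ x :=
  Nat.sInf_le ⟨hx, hx0⟩

lemma le_of_mem_nM (hS : IsNumSgp S) : ∀ t, ∀ s ∈ nM S t, t * mult S ≤ s := by
  intro t
  induction t with
  | zero => intro s _; simp
  | succ t ih =>
    intro s hs
    rcases Set.mem_add.1 hs with ⟨c, hc, d, hd, rfl⟩
    have h1 : mult S ≤ c := mult_le hS hc.1 (by simpa using hc.2)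
    have h2 : t * mult S ≤ d := ih d hd
    nlinarith

lemma ord_bdd (hS : IsNumSgp S) (s : ℕ) : BddAbove {t : ℕ | s ∈ nM S t} := by
  refine ⟨s, fun t ht => ?_⟩
  have h1 := le_of_mem_nM hS t s ht
  have h2 := mult_pos hS
  nlinarith

lemma nM_zero : nM S 0 = S := rfl

lemma mem_nM_ordS (hS : IsNumSgp S) {s : ℕ} (hs : s ∈ S) : s ∈ nM S (ordS S s) := by
  have h : sSup {t : ℕ | s ∈ nM S t} ∈ {t : ℕ | s ∈ nM S t} :=
    Nat.sSup_mem ⟨0, show s ∈ nM S 0 from nM_zero ▸ hs⟩ (ord_bdd hS s)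
  exact h

lemma le_ordS (hS : IsNumSgp S) {s t : ℕ} (h : s ∈ nM S t) : t ≤ ordS S s :=
  le_csSup (ord_bdd hS s) h

lemma ordS_zero (hS : IsNumSgp S) : ordS S 0 = 0 := by
  refine le_antisymm ?_ (Nat.zero_le _)
  refine csSup_le ⟨0, hS.1⟩ fun t ht => ?_
  have h1 := le_of_mem_nM hS t 0 ht
  have h2 := mult_pos hS
  nlinarith [Nat.eq_zero_of_le_zero h1]

lemma ordS_superadd (hS : IsNumSgp S) {a b : ℕ} (ha : a ∈ S) (hb : b ∈ S) :
    ordS S a + ordS S b ≤ ordS S (a + b) :=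
  le_ordS hS (add_mem_nM hS _ _ a (mem_nM_ordS hS ha) b (mem_nM_ordS hS hb))

lemma add_mul_mult_mem (hS : IsNumSgp S) {s : ℕ} (hs : s ∈ S) (j : ℕ) :
    s + j * mult S ∈ S := by
  induction j with
  | zero => simpa using hs
  | succ j ih =>
    have : s + j * mult S + mult S ∈ S := hS.2.1 _ ih _ (mult_mem hS).1
    have e : s + (j + 1) * mult S = s + j * mult S + mult S := by ring
    rwa [e]

lemma mul_mult_mem (hS : IsNumSgp S) (j : ℕ) : j * mult S ∈ S := by
  simpa using add_mul_mult_mem hS hS.1 j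

section CM
variable (hS : IsNumSgp S) (hCM : ∀ s ∈ S, ordS S (s + mult S) = ordS S s + 1)
include hS hCM

lemma ordS_add_mul (s : ℕ) (hs : s ∈ S) (j : ℕ) :
    ordS S (s + j * mult S) = ordS S s + j := by
  induction j with
  | zero => simp
  | succ j ih =>
    have e : s + (j + 1) * mult S = s + j * mult S + mult S := by ring
    rw [e, hCM _ (add_mul_mult_mem hS hs j), ih]
    omega

end CM

/-! ### Frobenius number and the Apéry set -/

lemma frob_spec (hS : IsNumSgp S) :
    ¬ zmem S (Frob S) ∧ ∀ z, ¬ zmem S z → z ≤ Frob S := by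
  obtain ⟨N, hN⟩ := hS.2.2.bddAbove
  have hbdd : ∀ z : ℤ, ¬ zmem S z → z ≤ (N : ℤ) := by
    intro z hz
    by_contra h
    push_neg at h
    have hz0 : 0 ≤ z := le_trans (Int.natCast_nonneg N) h.le
    obtain ⟨m, rfl⟩ := Int.eq_ofNat_of_zero_le hz0
    have hm : m ∈ S := by
      by_contra hm
      have := hN hm
      exact absurd h (by exact_mod_cast not_lt.2 this)
    exact hz ⟨m, hm, rfl⟩
  have hinh : ∃ z : ℤ, ¬ zmem S z := by
    refine ⟨-1, fun ⟨t, _, ht⟩ => ?_⟩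
    omega
  obtain ⟨ub, hub, hub2⟩ := Int.exists_greatest_of_bdd ⟨N, hbdd⟩ hinh
  have : Frob S = ub := by
    apply IsGreatest.csSup_eq
    exact ⟨hub, fun z hz => hub2 z hz⟩
  rw [this]
  exact ⟨hub, hub2⟩

lemma neg_one_le_frob (hS : IsNumSgp S) : -1 ≤ Frob S := by
  refine (frob_spec hS).2 (-1) fun ⟨t, _, ht⟩ => ?_
  omega

section Star
variable (hS : IsNumSgp S) (hsym : IsSymmetric S) {x : ℕ} (hx : x ∈ S) (hx0 : x ≠ 0)

/-- the top element of the Apéry set, `F + x`, as a natural number. -/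
noncomputable def fx (S : Set ℕ) (x : ℕ) : ℕ := (Frob S + x).toNat

include hS hx0 in
lemma fx_cast : ((fx S x : ℕ) : ℤ) = Frob S + x := by
  have h := neg_one_le_frob hS
  have : (1 : ℤ) ≤ x := by exact_mod_cast Nat.one_le_iff_ne_zero.2 hx0
  unfold fx
  omega

include hS hsym hx hx0 in
lemma star_mem {w : ℕ} (hw : w ∈ Ap S x) : w ≤ fx S x ∧ fx S x - w ∈ Ap S x := by
  have hfx := fx_cast hS (x := x) hx0
  have hzm : zmem S (Frob S + x - w) := by
    rw [hsym]
    rintro ⟨t, htS, ht⟩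
    have hwt : w = t + x := by omega
    exact hw.2 ⟨t, htS, hwt⟩
  obtain ⟨t₀, ht₀S, ht₀⟩ := hzm
  have hwle : w ≤ fx S x := by omega
  have hts : fx S x - w = t₀ := by omega
  refine ⟨hwle, ?_⟩
  rw [hts]
  refine ⟨ht₀S, ?_⟩
  rintro ⟨t, htS, ht'⟩
  have : zmem S (Frob S - w) := ⟨t, htS, by omega⟩
  exact ((hsym w).1 ⟨w, hw.1, rfl⟩) this

include hS hx0 in
lemma zero_mem_Ap : 0 ∈ Ap S x :=
  ⟨hS.1, by rintro ⟨t, -, ht⟩; omega⟩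

include hS hsym hx hx0 in
lemma fx_mem_Ap : fx S x ∈ Ap S x := by
  have h := star_mem hS hsym hx hx0 (zero_mem_Ap hS hx0)
  simpa using h.2

include hS hsym hx hx0 in
lemma Ap_finite : (Ap S x).Finite := by
  refine (Set.finite_Icc 0 (fx S x)).subset fun w hw => ?_
  exact ⟨Nat.zero_le _, (star_mem hS hsym hx hx0 hw).1⟩

include hS hsym hx hx0 in
lemma add_star {w : ℕ} (hw : w ∈ Ap S x) : w + (fx S x - w) = fx S x := by
  have := (star_mem hS hsym hx hx0 hw).1
  omega

include hS hsym hx hx0 in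
lemma star_star {w : ℕ} (hw : w ∈ Ap S x) : fx S x - (fx S x - w) = w := by
  have := (star_mem hS hsym hx hx0 hw).1
  omega

/-! ### the top order `d` -/

include hS hsym hx hx0 in
lemma dS_eq_ord_fx : dS S x = ordS S (fx S x) := by
  have hmem : ordS S (fx S x) ∈ ordS S '' Ap S x :=
    ⟨fx S x, fx_mem_Ap hS hsym hx hx0, rfl⟩
  have hb : BddAbove (ordS S '' Ap S x) :=
    ((Ap_finite hS hsym hx hx0).image _).bddAbove
  refine le_antisymm (csSup_le ⟨_, hmem⟩ ?_) (le_csSup hb hmem)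
  rintro o ⟨w, hw, rfl⟩
  have h1 : ordS S w + ordS S (fx S x - w) ≤ ordS S (w + (fx S x - w)) :=
    ordS_superadd hS hw.1 (star_mem hS hsym hx hx0 hw).2.1
  rw [add_star hS hsym hx hx0 hw] at h1
  omega

include hS hsym hx hx0 in
lemma ordS_le_dS {w : ℕ} (hw : w ∈ Ap S x) : ordS S w ≤ dS S x := by
  have hb : BddAbove (ordS S '' Ap S x) :=
    ((Ap_finite hS hsym hx hx0).image _).bddAbove
  exact le_csSup hb ⟨w, hw, rfl⟩

include hS hsym hx hx0 in
lemma claimA {w : ℕ} (hw : w ∈ Ap S x) :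
    ordS S w + ordS S (fx S x - w) ≤ dS S x := by
  have h1 : ordS S w + ordS S (fx S x - w) ≤ ordS S (w + (fx S x - w)) :=
    ordS_superadd hS hw.1 (star_mem hS hsym hx hx0 hw).2.1
  rw [add_star hS hsym hx hx0 hw] at h1
  rw [dS_eq_ord_fx hS hsym hx hx0]
  omega

/-! ### maximal elements and climbing -/

include hS hsym hx hx0 in
lemma fx_mem_MaxMAp : fx S x ∈ MaxMAp S x := by
  refine ⟨fx_mem_Ap hS hsym hx hx0, ?_⟩
  rintro y hy ⟨z, hz, rfl, _⟩
  have := (star_mem hS hsym hx hx0 hy).1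
  omega

include hS hsym hx hx0 in
lemma exists_maxM_above : ∀ n : ℕ, ∀ w ∈ Ap S x, fx S x - w ≤ n →
    ∃ y ∈ MaxMAp S x, ∃ z ∈ S, y = w + z ∧ ordS S y = ordS S w + ordS S z := by
  intro n
  induction n with
  | zero =>
    intro w hw hn
    have hle := (star_mem hS hsym hx hx0 hw).1
    have hwfx : w = fx S x := by omega
    refine ⟨w, ?_, 0, hS.1, (add_zero w).symm, by simp [ordS_zero hS]⟩
    rw [hwfx]
    exact fx_mem_MaxMAp hS hsym hx hx0
  | succ n ih =>
    intro w hw hn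
    by_cases hmax : w ∈ MaxMAp S x
    · exact ⟨w, hmax, 0, hS.1, by simp, by simp [ordS_zero hS]⟩
    · have : ∃ y ∈ Ap S x,
          (∃ z ∈ S, y = w + z ∧ ordS S y = ordS S w + ordS S z) ∧ y ≠ w := by
        by_contra hcon
        push_neg at hcon
        exact hmax ⟨hw, fun y hy hyz => hcon y hy hyz⟩
      obtain ⟨y, hy, ⟨z, hzS, rfl, hord⟩, hne⟩ := this
      have hz0 : z ≠ 0 := by rintro rfl; simp at hne
      have hyle := (star_mem hS hsym hx hx0 hy).1
      have hstep : fx S x - (w + z) ≤ n := by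
        have : 0 < z := Nat.pos_of_ne_zero hz0
        omega
      obtain ⟨y', hy', z', hz'S, hy'eq, hy'ord⟩ := ih (w + z) hy hstep
      refine ⟨y', hy', z + z', hS.2.1 z hzS z' hz'S, by omega, ?_⟩
      have h1 : ordS S y' = ordS S w + ordS S z + ordS S z' := by omega
      have h2 : ordS S z + ordS S z' ≤ ordS S (z + z') := ordS_superadd hS hzS hz'S
      have h3 : ordS S w + ordS S (z + z') ≤ ordS S y' := by
        rw [hy'eq]
        have : w + z + z' = w + (z + z') := by ring
        rw [this]
        exact ordS_superadd hS hw.1 (hS.2.1 z hzS z' hz'S)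
      omega

/-! ### M-purity vs the pairing condition -/

include hS hsym hx hx0 in
lemma maxM_ord_eq_d (hP : ∀ w ∈ Ap S x, ordS S w + ordS S (fx S x - w) = dS S x)
    {y : ℕ} (hy : y ∈ MaxMAp S x) : ordS S y = dS S x := by
  have hle : ordS S y ≤ dS S x := ordS_le_dS hS hsym hx hx0 hy.1
  by_contra hne
  have hlt : ordS S y < dS S x := lt_of_le_of_ne hle hne
  have hstar := hP y hy.1
  have hstar0 : ordS S (fx S x - y) ≠ 0 := by omega
  have h0 : fx S x - y ≠ 0 := by
    rintro h
    rw [h, ordS_zero hS] at hstar0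
    exact hstar0 rfl
  have := hy.2 (fx S x) (fx_mem_Ap hS hsym hx hx0)
    ⟨fx S x - y, (star_mem hS hsym hx hx0 hy.1).2.1,
      (add_star hS hsym hx hx0 hy.1).symm, by
        rw [← dS_eq_ord_fx hS hsym hx hx0]; omega⟩
  have hyle := (star_mem hS hsym hx hx0 hy.1).1
  omega

include hS hsym hx hx0 in
lemma mpure_iff_pairing :
    MPureWrt S x ↔ ∀ w ∈ Ap S x, ordS S w + ordS S (fx S x - w) = dS S x := by
  constructor
  · intro hpure w hw
    obtain ⟨y, hy, z, hzS, hyeq, hyord⟩ :=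
      exists_maxM_above hS hsym hx hx0 (fx S x - w) w hw le_rfl
    have hyd : ordS S y = dS S x := by
      rw [hpure y hy (fx S x) (fx_mem_MaxMAp hS hsym hx hx0),
        dS_eq_ord_fx hS hsym hx hx0]
    have hA := claimA hS hsym hx hx0 hw
    have hAy := claimA hS hsym hx hx0 hy.1
    have hy0 : ordS S (fx S x - y) = 0 := by omega
    -- fx - w = (fx - y) + z
    have hwle := (star_mem hS hsym hx hx0 hw).1
    have hyle := (star_mem hS hsym hx hx0 hy.1).1
    have hsplit : fx S x - w = (fx S x - y) + z := by omega
    have hge : ordS S (fx S x - y) + ordS S z ≤ ordS S (fx S x - w) := by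
      rw [hsplit]
      exact ordS_superadd hS (star_mem hS hsym hx hx0 hy.1).2.1 hzS
    omega
  · intro hP w hw w' hw'
    rw [maxM_ord_eq_d hS hsym hx hx0 hP hw, maxM_ord_eq_d hS hsym hx hx0 hP hw']

/-! ### counting: `β` symmetry vs the pairing condition -/

/-- the Apéry set as a `Finset`. -/
noncomputable def apFin (hS : IsNumSgp S) (hsym : IsSymmetric S) (hx : x ∈ S)
    (hx0 : x ≠ 0) : Finset ℕ := (Ap_finite hS hsym hx hx0).toFinset

include hS hsym hx hx0 in
lemma mem_apFin {w : ℕ} : w ∈ apFin hS hsym hx hx0 ↔ w ∈ Ap S x :=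
  Set.Finite.mem_toFinset _

include hS hsym hx hx0 in
lemma betaS_eq (i : ℕ) :
    betaS S x i = ((apFin hS hsym hx hx0).filter fun w => ordS S w = i).card := by
  rw [betaS, ← Set.ncard_coe_finset]
  congr 1
  ext w
  simp only [Set.mem_sep_iff, Set.mem_setOf_eq, Finset.coe_filter,
    mem_apFin hS hsym hx hx0]

include hS hsym hx hx0 in
lemma pairing_imp_beta
    (hP : ∀ w ∈ Ap S x, ordS S w + ordS S (fx S x - w) = dS S x) :
    ∀ i ≤ dS S x, betaS S x i = betaS S x (dS S x - i) := by
  intro i hi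
  rw [betaS_eq hS hsym hx hx0, betaS_eq hS hsym hx hx0]
  apply Finset.card_nbij' (fun w => fx S x - w) (fun w => fx S x - w)
  · intro w hw
    rw [Finset.mem_coe, Finset.mem_filter, mem_apFin hS hsym hx hx0] at hw ⊢
    refine ⟨(star_mem hS hsym hx hx0 hw.1).2, ?_⟩
    have := hP w hw.1
    beta_reduce
    omega
  · intro w hw
    rw [Finset.mem_coe, Finset.mem_filter, mem_apFin hS hsym hx hx0] at hw ⊢
    refine ⟨(star_mem hS hsym hx hx0 hw.1).2, ?_⟩
    have := hP w hw.1
    beta_reduce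
    omega
  · intro w hw
    rw [Finset.mem_coe, Finset.mem_filter, mem_apFin hS hsym hx hx0] at hw
    exact star_star hS hsym hx hx0 hw.1
  · intro w hw
    rw [Finset.mem_coe, Finset.mem_filter, mem_apFin hS hsym hx hx0] at hw
    exact star_star hS hsym hx hx0 hw.1

include hS hsym hx hx0 in
lemma card_le_sum (i : ℕ) :
    ((apFin hS hsym hx hx0).filter fun w => ordS S w ≤ i).card
      = ∑ j ∈ Finset.range (i + 1),
        ((apFin hS hsym hx hx0).filter fun w => ordS S w = j).card := by
  induction i with
  | zero => simp [Nat.le_zero]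
  | succ i ih =>
    rw [Finset.sum_range_succ, ← ih]
    rw [← Finset.card_union_of_disjoint]
    · congr 1
      ext w
      simp only [Finset.mem_union, Finset.mem_filter]
      constructor
      · rintro ⟨hw, h⟩
        rcases Nat.lt_or_ge (ordS S w) (i + 1) with h' | h'
        · exact Or.inl ⟨hw, by omega⟩
        · exact Or.inr ⟨hw, by omega⟩
      · rintro (⟨hw, h⟩ | ⟨hw, h⟩) <;> exact ⟨hw, by omega⟩
    · rw [Finset.disjoint_left]
      intro w hw hw'
      simp only [Finset.mem_filter] at hw hw'
      omega

include hS hsym hx hx0 in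
lemma card_ge_sum : ∀ i ≤ dS S x,
    ((apFin hS hsym hx hx0).filter fun w => dS S x ≤ ordS S w + i).card
      = ∑ j ∈ Finset.range (i + 1),
        ((apFin hS hsym hx hx0).filter fun w => ordS S w = dS S x - j).card := by
  intro i
  induction i with
  | zero =>
    intro _
    simp only [zero_add, Finset.range_one, Finset.sum_singleton]
    congr 1
    ext w
    simp only [Finset.mem_filter, and_congr_right_iff]
    intro hw
    have := ordS_le_dS hS hsym hx hx0 ((mem_apFin hS hsym hx hx0).1 hw)
    omega
  | succ i ih =>
    intro hle
    rw [Finset.sum_range_succ, ← ih (by omega)]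
    rw [← Finset.card_union_of_disjoint]
    · congr 1
      ext w
      simp only [Finset.mem_union, Finset.mem_filter, and_congr_right_iff]
      have hw' : w ∈ apFin hS hsym hx hx0 → ordS S w ≤ dS S x := fun hw =>
        ordS_le_dS hS hsym hx hx0 ((mem_apFin hS hsym hx hx0).1 hw)
      constructor
      · rintro ⟨hw, h⟩
        have := hw' hw
        rcases Nat.lt_or_ge (ordS S w + i) (dS S x) with h' | h'
        · exact Or.inr ⟨hw, by omega⟩
        · exact Or.inl ⟨hw, by omega⟩
      · rintro (⟨hw, h⟩ | ⟨hw, h⟩) <;> exact ⟨hw, by omega⟩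
    · rw [Finset.disjoint_left]
      intro w hw hw'
      simp only [Finset.mem_filter] at hw hw'
      omega

include hS hsym hx hx0 in
lemma beta_imp_pairing
    (hb : ∀ i ≤ (dS S x + 1) / 2, betaS S x i = betaS S x (dS S x - i)) :
    ∀ w ∈ Ap S x, ordS S w + ordS S (fx S x - w) = dS S x := by
  have hfull : ∀ i ≤ dS S x, betaS S x i = betaS S x (dS S x - i) := by
    intro i hi
    rcases le_or_gt i ((dS S x + 1) / 2) with h | h
    · exact hb i h
    · have h1 : dS S x - i ≤ (dS S x + 1) / 2 := by omega
      have := hb (dS S x - i) h1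
      rw [this]
      congr 1
      omega
  intro w hw
  have hA := claimA hS hsym hx hx0 hw
  by_contra hne
  have hlt : ordS S w + ordS S (fx S x - w) < dS S x := lt_of_le_of_ne hA hne
  set i := ordS S w with hi
  have hidle : i ≤ dS S x := ordS_le_dS hS hsym hx hx0 hw
  -- T and U have the same cardinality
  have hcard : ((apFin hS hsym hx hx0).filter fun u => ordS S u ≤ i).card
      = ((apFin hS hsym hx hx0).filter fun u => dS S x ≤ ordS S u + i).card := by
    rw [card_le_sum hS hsym hx hx0, card_ge_sum hS hsym hx hx0 i hidle]
    apply Finset.sum_congr rfl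
    intro j hj
    rw [Finset.mem_range] at hj
    have hj' : j ≤ dS S x := by omega
    have := hfull j hj'
    rw [betaS_eq hS hsym hx hx0, betaS_eq hS hsym hx hx0] at this
    rw [this]
  -- the star map sends U into T.erase w, injectively
  have hwT : w ∈ (apFin hS hsym hx hx0).filter fun u => ordS S u ≤ i := by
    rw [Finset.mem_filter, mem_apFin hS hsym hx hx0]
    exact ⟨hw, le_rfl⟩
  have hUle : ((apFin hS hsym hx hx0).filter fun u => dS S x ≤ ordS S u + i).card
      ≤ (((apFin hS hsym hx hx0).filter fun u => ordS S u ≤ i).erase w).card := by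
    apply Finset.card_le_card_of_injOn (fun u => fx S x - u)
    · intro u hu
      rw [Finset.mem_coe, Finset.mem_filter, mem_apFin hS hsym hx hx0] at hu
      have hAu := claimA hS hsym hx hx0 hu.1
      rw [Finset.mem_coe, Finset.mem_erase]
      constructor
      · intro heq
        have hinv : u = fx S x - w := by
          beta_reduce at heq
          rw [← star_star hS hsym hx hx0 hu.1, heq]
        rw [hinv] at hu
        omega
      · rw [Finset.mem_filter, mem_apFin hS hsym hx hx0]
        exact ⟨(star_mem hS hsym hx hx0 hu.1).2, by beta_reduce; omega⟩
    · intro u hu v hv heq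
      simp only [Finset.mem_coe, Finset.mem_filter,
        mem_apFin hS hsym hx hx0] at hu hv
      simp only at heq
      rw [← star_star hS hsym hx hx0 hu.1, heq, star_star hS hsym hx hx0 hv.1]
  have := Finset.card_erase_lt_of_mem hwT
  omega

end Star

/-! ### scaling by multiples of the multiplicity (uses Cohen–Macaulayness) -/

section KScale
variable (hS : IsNumSgp S) (hsym : IsSymmetric S)
  (hCM : ∀ s ∈ S, ordS S (s + mult S) = ordS S s + 1)

include hS in
lemma exists_ap_decomp {x : ℕ} (hx0 : x ≠ 0) :
    ∀ s ∈ S, ∃ w ∈ Ap S x, ∃ n : ℕ, s = w + n * x := by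
  intro s
  induction s using Nat.strong_induction_on with
  | _ s ih =>
    intro hs
    by_cases h : ∃ t ∈ S, s = t + x
    · obtain ⟨t, htS, rfl⟩ := h
      have hlt : t < t + x := by omega
      obtain ⟨w, hw, n, rfl⟩ := ih t hlt htS
      exact ⟨w, hw, n + 1, by ring⟩
    · exact ⟨s, ⟨hs, h⟩, 0, by simp⟩

include hS in
lemma mem_Ap_ke {k w j : ℕ} (hk : 0 < k) (hw : w ∈ Ap S (mult S)) (hj : j < k) :
    w + j * mult S ∈ Ap S (k * mult S) := by
  refine ⟨add_mul_mult_mem hS hw.1 j, ?_⟩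
  rintro ⟨t, htS, heq⟩
  obtain ⟨c, hc⟩ : ∃ c, k = j + c + 1 := ⟨k - j - 1, by omega⟩
  subst hc
  have hsplit : (j + c + 1) * mult S = j * mult S + (c * mult S + mult S) := by
    ring
  rw [hsplit] at heq
  have hw' : w = t + c * mult S + mult S := by
    set a := j * mult S
    set b := c * mult S
    omega
  exact hw.2 ⟨t + c * mult S, add_mul_mult_mem hS htS c, hw'⟩

include hS in
lemma Ap_ke_decomp {k u : ℕ} (hk : 0 < k) (hu : u ∈ Ap S (k * mult S)) :
    ∃ w ∈ Ap S (mult S), ∃ j, j < k ∧ u = w + j * mult S := by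
  obtain ⟨w, hw, n, rfl⟩ := exists_ap_decomp hS (mult_mem hS).2 u hu.1
  refine ⟨w, hw, n, ?_, rfl⟩
  by_contra h
  push_neg at h
  obtain ⟨c, hc⟩ : ∃ c, n = c + k := ⟨n - k, by omega⟩
  subst hc
  exact hu.2 ⟨w + c * mult S, add_mul_mult_mem hS hw.1 c, by ring⟩

include hS in
lemma fx_ke {k : ℕ} (hk : 0 < k) :
    fx S (k * mult S) = fx S (mult S) + (k - 1) * mult S := by
  have he0 := (mult_mem hS).2
  have hx0 : k * mult S ≠ 0 := Nat.mul_ne_zero (by omega) he0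
  have h1 : ((fx S (k * mult S) : ℕ) : ℤ) = Frob S + ((k * mult S : ℕ) : ℤ) :=
    fx_cast hS hx0
  have h2 : ((fx S (mult S) : ℕ) : ℤ) = Frob S + ((mult S : ℕ) : ℤ) :=
    fx_cast hS he0
  have key : ((fx S (mult S) + (k - 1) * mult S : ℕ) : ℤ)
      = ((fx S (k * mult S) : ℕ) : ℤ) := by
    push_cast [h2, h1, Nat.cast_sub (by omega : 1 ≤ k)]
    ring
  exact_mod_cast key.symm

include hS hsym hCM in
lemma d_ke {k : ℕ} (hk : 0 < k) :
    dS S (k * mult S) = dS S (mult S) + (k - 1) := by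
  have he := (mult_mem hS).1
  have he0 := (mult_mem hS).2
  have hx : k * mult S ∈ S := mul_mult_mem hS k
  have hx0 : k * mult S ≠ 0 := Nat.mul_ne_zero (by omega) he0
  rw [dS_eq_ord_fx hS hsym hx hx0, dS_eq_ord_fx hS hsym he he0, fx_ke hS hk,
    ordS_add_mul hS hCM _ (fx_mem_Ap hS hsym he he0).1]

include hS hsym hCM in
lemma pairing_ke_iff {k : ℕ} (hk : 0 < k) :
    (∀ u ∈ Ap S (k * mult S),
        ordS S u + ordS S (fx S (k * mult S) - u) = dS S (k * mult S))
      ↔ (∀ w ∈ Ap S (mult S),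
        ordS S w + ordS S (fx S (mult S) - w) = dS S (mult S)) := by
  have he := (mult_mem hS).1
  have he0 := (mult_mem hS).2
  have hx : k * mult S ∈ S := mul_mult_mem hS k
  have hx0 : k * mult S ≠ 0 := Nat.mul_ne_zero (by omega) he0
  have hd := d_ke hS hsym hCM hk
  have hfk := fx_ke hS hk
  constructor
  · intro hP w hw
    have hu : w + (k - 1) * mult S ∈ Ap S (k * mult S) :=
      mem_Ap_ke hS hk hw (by omega)
    have h1 := hP _ hu
    have hordu : ordS S (w + (k - 1) * mult S) = ordS S w + (k - 1) :=
      ordS_add_mul hS hCM w hw.1 (k - 1)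
    have hwle := (star_mem hS hsym he he0 hw).1
    have hstar : fx S (k * mult S) - (w + (k - 1) * mult S)
        = fx S (mult S) - w := by
      rw [hfk]
      set a := (k - 1) * mult S
      omega
    rw [hordu, hstar, hd] at h1
    omega
  · intro hP u hu
    obtain ⟨w, hw, j, hj, rfl⟩ := Ap_ke_decomp hS hk hu
    have hordu : ordS S (w + j * mult S) = ordS S w + j :=
      ordS_add_mul hS hCM w hw.1 j
    have hwle := (star_mem hS hsym he he0 hw).1
    have hstarS : fx S (mult S) - w ∈ S := (star_mem hS hsym he he0 hw).2.1
    have hsplit : (k - 1) * mult S = j * mult S + (k - 1 - j) * mult S := by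
      rw [← Nat.add_mul]
      congr 1
      omega
    have hstar : fx S (k * mult S) - (w + j * mult S)
        = (fx S (mult S) - w) + (k - 1 - j) * mult S := by
      rw [hfk, hsplit]
      set a := j * mult S
      set b := (k - 1 - j) * mult S
      omega
    have hords : ordS S ((fx S (mult S) - w) + (k - 1 - j) * mult S)
        = ordS S (fx S (mult S) - w) + (k - 1 - j) :=
      ordS_add_mul hS hCM _ hstarS (k - 1 - j)
    have h1 := hP w hw
    rw [hordu, hstar, hords, hd]
    omega

end KScale
end NSAux
end Aux

/-- for a symmetric numerical semigroup `S` whose tangent cone is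
Cohen–Macaulay (i.e. `ord_S(s+e) = ord_S(s)+1` for all `s ∈ S`, `e = m(S)`),
the following are equivalent:
(1) `S` is M-pure;
(2) `β_i(ke) = β_{d(ke)-i}(ke)` for some `k > 0` and all `0 ≤ i ≤ ⌊(d(ke)+1)/2⌋`;
(3) the same for every `k > 0`;
(4) `S` is M-pure with respect to `ke` for every `k > 0`;
(5) `S` is M-pure with respect to `ke` for some `k > 0`. -/
theorem stmt5 (S : Set ℕ) (hS : IsNumSgp S) (hsym : IsSymmetric S)
    (hCM : ∀ s ∈ S, ordS S (s + mult S) = ordS S s + 1) :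
    List.TFAE
      [ MPure S,
        ∃ k : ℕ, 0 < k ∧ ∀ i : ℕ, i ≤ (dS S (k * mult S) + 1) / 2 →
          betaS S (k * mult S) i = betaS S (k * mult S) (dS S (k * mult S) - i),
        ∀ k : ℕ, 0 < k → ∀ i : ℕ, i ≤ (dS S (k * mult S) + 1) / 2 →
          betaS S (k * mult S) i = betaS S (k * mult S) (dS S (k * mult S) - i),
        ∀ k : ℕ, 0 < k → MPureWrt S (k * mult S),
        ∃ k : ℕ, 0 < k ∧ MPureWrt S (k * mult S) ] := by
  have he : mult S ∈ S := (NSAux.mult_mem hS).1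
  have he0 : mult S ≠ 0 := (NSAux.mult_mem hS).2
  have key1 : ∀ k : ℕ, 0 < k → (MPureWrt S (k * mult S) ↔
      ∀ w ∈ Ap S (mult S),
        ordS S w + ordS S (NSAux.fx S (mult S) - w) = dS S (mult S)) := by
    intro k hk
    have hx : k * mult S ∈ S := NSAux.mul_mult_mem hS k
    have hx0 : k * mult S ≠ 0 := Nat.mul_ne_zero (by omega) he0
    rw [NSAux.mpure_iff_pairing hS hsym hx hx0]
    exact NSAux.pairing_ke_iff hS hsym hCM hk
  have key2 : ∀ k : ℕ, 0 < k →
      ((∀ i : ℕ, i ≤ (dS S (k * mult S) + 1) / 2 →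
          betaS S (k * mult S) i = betaS S (k * mult S) (dS S (k * mult S) - i)) ↔
        ∀ w ∈ Ap S (mult S),
          ordS S w + ordS S (NSAux.fx S (mult S) - w) = dS S (mult S)) := by
    intro k hk
    have hx : k * mult S ∈ S := NSAux.mul_mult_mem hS k
    have hx0 : k * mult S ≠ 0 := Nat.mul_ne_zero (by omega) he0
    constructor
    · intro hb
      exact (NSAux.pairing_ke_iff hS hsym hCM hk).1
        (NSAux.beta_imp_pairing hS hsym hx hx0 hb)
    · intro hP i hi
      exact NSAux.pairing_imp_beta hS hsym hx hx0
        ((NSAux.pairing_ke_iff hS hsym hCM hk).2 hP) i (by omega)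
  have hmp : MPureWrt S (mult S) ↔
      ∀ w ∈ Ap S (mult S),
        ordS S w + ordS S (NSAux.fx S (mult S) - w) = dS S (mult S) := by
    have h := key1 1 one_pos
    rwa [one_mul] at h
  tfae_have 1 → 4 := fun h1 k hk => (key1 k hk).2 (hmp.1 h1)
  tfae_have 4 → 3 := fun h4 k hk => (key2 k hk).2 ((key1 k hk).1 (h4 k hk))
  tfae_have 3 → 2 := fun h3 => ⟨1, one_pos, h3 1 one_pos⟩
  tfae_have 2 → 5 := fun ⟨k, hk, hb⟩ => ⟨k, hk, (key1 k hk).2 ((key2 k hk).1 hb)⟩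
  tfae_have 5 → 1 := fun ⟨k, hk, hp⟩ => hmp.2 ((key1 k hk).1 hp)
  tfae_finish
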